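/- (Polynomial Affection Principle.) Let Γ = (Ĝ, S) be a finite connected loose graph, let xy be an edge of Ĝ with both endpoints x, y ∈ S, let Γ_{xy} = (Ĝ', S) be the resolution of Γ along xy, and let k be any finite field. Then the numbers of k-rational points satisfy |X_Γ(k)| − |X_{Γ_{xy}}(k)| = |X_Γ(k) ∩ P_{x,y}(k)| − |X_{Γ_{xy}}(k) ∩ P'_{x,y}(k)|. (This is the point-count version of the identity [Γ]_k − [Γ_{xy}]_k = [Γ|_{P_{x,y}}]_k − [Γ_{xy}|_{P_{x,y}}]_k in the Grothendieck ring of k-schemes.) -/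

import Mathlib

/-- The local affine chart `A_v^H(k)` of the vertex `v` of the graph `H`. -/
def looseChart {V : Type} (H : SimpleGraph V) (k : Type) [Field k] (v : V) :
    Set (Projectivization k (V → k)) :=
  {p | (∀ w, w ∉ insert v (H.neighborSet v) → p.rep w = 0) ∧ p.rep v ≠ 0}

/-- The closed ball of radius 1 around `u` in the graph `H`. -/
def closedBall {V : Type} (H : SimpleGraph V) (u : V) : Set V :=
  insert u (H.neighborSet u)

/-- The projective subspace `P_{x,y}(k)` generated by the closed balls of
radius 1 around `x` and `y`. -/
def ballSpace {V : Type} (H : SimpleGraph V) (k : Type) [Field k] (x y : V) :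
    Set (Projectivization k (V → k)) :=
  {p | ∀ w, w ∉ closedBall H x ∪ closedBall H y → p.rep w = 0}

/-- The completion `Ĝ'` of the resolution of the loose graph `(Ĝ, S)` along the
edge `xy`: the edge `xy` is deleted and two new pendant vertices `x̃ = inr false`
and `ỹ = inr true` are attached to `x` and `y` respectively. -/
def resGraph {V : Type} (G : SimpleGraph V) (x y : V) : SimpleGraph (V ⊕ Bool) where
  Adj a b :=
    match a, b with
    | Sum.inl a, Sum.inl b => G.Adj a b ∧ ¬((a = x ∧ b = y) ∨ (a = y ∧ b = x))
    | Sum.inl a, Sum.inr c => (c = false ∧ a = x) ∨ (c = true ∧ a = y)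
    | Sum.inr c, Sum.inl a => (c = false ∧ a = x) ∨ (c = true ∧ a = y)
    | Sum.inr _, Sum.inr _ => False
  symm := by
    constructor
    rintro (a | c) (b | d) h
    · exact ⟨h.1.symm, fun hc => h.2 (by tauto)⟩
    · exact h
    · exact h
    · exact h
  loopless := by
    constructor
    rintro (a | c) h
    · exact G.loopless.irrefl a h.1
    · exact h

/-- Extension by zero, as a linear map. -/
noncomputable def extMap (k V : Type) [Field k] : (V → k) →ₗ[k] (V ⊕ Bool → k) where
  toFun f := Sum.elim f 0
  map_add' f g := by funext w; cases w <;> simp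
  map_smul' c f := by funext w; cases w <;> simp

lemma extMap_inj (k V : Type) [Field k] : Function.Injective (extMap k V) :=
  fun f g h => funext fun w => congrFun h (Sum.inl w)

section Aux

variable {V : Type} (G : SimpleGraph V) (x y : V)

lemma res_adj_ll (a b : V) :
    (resGraph G x y).Adj (Sum.inl a) (Sum.inl b) ↔
      G.Adj a b ∧ ¬((a = x ∧ b = y) ∨ (a = y ∧ b = x)) := Iff.rfl

lemma res_adj_lr (a : V) (c : Bool) :
    (resGraph G x y).Adj (Sum.inl a) (Sum.inr c) ↔
      (c = false ∧ a = x) ∨ (c = true ∧ a = y) := Iff.rfl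

lemma hA {v : V} (hvx : v ≠ x) (hvy : v ≠ y) (w : V) :
    Sum.inl w ∈ insert (Sum.inl v : V ⊕ Bool)
        ((resGraph G x y).neighborSet (Sum.inl v)) ↔
      w ∈ insert v (G.neighborSet v) := by
  simp only [Set.mem_insert_iff, SimpleGraph.mem_neighborSet, res_adj_ll, Sum.inl.injEq]
  tauto

lemma hB {v : V} (hvx : v ≠ x) (hvy : v ≠ y) (b : Bool) :
    Sum.inr b ∉ insert (Sum.inl v : V ⊕ Bool)
        ((resGraph G x y).neighborSet (Sum.inl v)) := by
  simp only [Set.mem_insert_iff, SimpleGraph.mem_neighborSet, res_adj_lr, reduceCtorEq,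
    false_or]
  tauto

lemma hC (hne : x ≠ y) (w : V) :
    Sum.inl w ∈ closedBall (resGraph G x y) (Sum.inl x) ∪
        closedBall (resGraph G x y) (Sum.inl y) ↔
      w ∈ closedBall G x ∪ closedBall G y := by
  by_cases hwx : w = x <;> by_cases hwy : w = y <;>
    simp only [closedBall, Set.mem_union, Set.mem_insert_iff, SimpleGraph.mem_neighborSet,
      res_adj_ll, Sum.inl.injEq] <;> tauto

end Aux

/-- **Polynomial Affection Principle** (point-count version). For a finite
connected loose graph `Γ = (Ĝ, S)`, an edge `xy` of `Ĝ` with `x, y ∈ S`, the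
resolution `Γ_{xy} = (Ĝ', S)` of `Γ` along `xy`, and any finite field `k`:
`|X_Γ(k)| − |X_{Γ_{xy}}(k)| = |X_Γ(k) ∩ P_{x,y}(k)| − |X_{Γ_{xy}}(k) ∩ P'_{x,y}(k)|`. -/
theorem polynomial_affection_principle {V : Type} [Fintype V]
    (G : SimpleGraph V) [DecidableRel G.Adj] (S : Finset V)
    (hconn : G.Connected)
    (hS1 : ∀ v ∉ S, G.degree v = 1)
    (hS2 : ∀ a b, G.Adj a b → a ∈ S ∨ b ∈ S)
    (x y : V) (hxy : G.Adj x y) (hx : x ∈ S) (hy : y ∈ S)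
    (k : Type) [Field k] [Fintype k] :
    ((⋃ v ∈ S, looseChart G k v).ncard : ℤ)
        - ((⋃ v ∈ S, looseChart (resGraph G x y) k (Sum.inl v)).ncard : ℤ)
      = (((⋃ v ∈ S, looseChart G k v) ∩ ballSpace G k x y).ncard : ℤ)
        - (((⋃ v ∈ S, looseChart (resGraph G x y) k (Sum.inl v)) ∩
            ballSpace (resGraph G x y) k (Sum.inl x) (Sum.inl y)).ncard : ℤ) := by
  classical
  have hne : x ≠ y := hxy.ne
  set ι := extMap k V with hιdef
  have hι : Function.Injective ι := extMap_inj k V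
  set F := Projectivization.map ι hι with hFdef
  -- the representative of `F p` is a scalar multiple of the extension of `p.rep`
  have hrep : ∀ p : Projectivization k (V → k), ∃ a : kˣ,
      (F p).rep = a • Sum.elim p.rep (0 : Bool → k) := by
    intro p
    have hne0 : ι p.rep ≠ 0 := by
      rw [← map_zero ι]; exact hι.ne p.rep_nonzero
    obtain ⟨a, ha⟩ := Projectivization.exists_smul_eq_mk_rep k (ι p.rep) hne0
    refine ⟨a, ?_⟩
    conv_lhs => rw [hFdef, ← p.mk_rep, Projectivization.map_mk]
    exact ha.symm
  set X : Set (Projectivization k (V → k)) := ⋃ v ∈ S, looseChart G k v with hXdef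
  set X' : Set (Projectivization k (V ⊕ Bool → k)) :=
    ⋃ v ∈ S, looseChart (resGraph G x y) k (Sum.inl v) with hX'def
  set P : Set (Projectivization k (V → k)) := ballSpace G k x y with hPdef
  set P' : Set (Projectivization k (V ⊕ Bool → k)) :=
    ballSpace (resGraph G x y) k (Sum.inl x) (Sum.inl y) with hP'def
  -- the image of `X \ P` under `F` is `X' \ P'`
  have himg : F '' (X \ P) = X' \ P' := by
    ext q
    simp only [Set.mem_image, Set.mem_diff]
    constructor
    · rintro ⟨p, ⟨hpX, hpP⟩, rfl⟩
      obtain ⟨v, hvS, hch⟩ := Set.mem_iUnion₂.1 hpX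
      obtain ⟨hsupp, hnz⟩ := hch
      have hvx : v ≠ x := by
        rintro rfl; exact hpP fun w hw => hsupp w fun hm => hw (Or.inl hm)
      have hvy : v ≠ y := by
        rintro rfl; exact hpP fun w hw => hsupp w fun hm => hw (Or.inr hm)
      obtain ⟨a, ha⟩ := hrep p
      constructor
      · refine Set.mem_biUnion hvS ⟨?_, ?_⟩
        · rintro (w | b) hw
          · rw [ha]
            have h0 : p.rep w = 0 := hsupp w fun hm => hw ((hA G x y hvx hvy w).2 hm)
            simp [h0]
          · rw [ha]; simp
        · rw [ha]
          simp only [Pi.smul_apply, Sum.elim_inl, Units.smul_def, smul_eq_mul, ne_eq,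
            mul_eq_zero, not_or]
          exact ⟨a.ne_zero, hnz⟩
      · intro hmem
        apply hpP
        intro w hw
        have h1 : (F p).rep (Sum.inl w) = 0 :=
          hmem (Sum.inl w) fun hc => hw ((hC G x y hne w).1 hc)
        rw [ha] at h1
        simpa [Units.smul_def, a.ne_zero] using h1
    · rintro ⟨hqX, hqP⟩
      obtain ⟨v, hvS, hch⟩ := Set.mem_iUnion₂.1 hqX
      obtain ⟨hsupp, hnz⟩ := hch
      have hvx : v ≠ x := by
        rintro rfl; exact hqP fun w hw => hsupp w fun hm => hw (Or.inl hm)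
      have hvy : v ≠ y := by
        rintro rfl; exact hqP fun w hw => hsupp w fun hm => hw (Or.inr hm)
      set g : V → k := fun w => q.rep (Sum.inl w) with hg
      have hg0 : g ≠ 0 := fun h => hnz (congrFun h v)
      have hinr : ∀ b, q.rep (Sum.inr b) = 0 := fun b => hsupp _ (hB G x y hvx hvy b)
      have hext : (ι g : V ⊕ Bool → k) = q.rep := by
        funext u
        cases u with
        | inl w => rfl
        | inr b => exact (hinr b).symm
      obtain ⟨a, ha⟩ := Projectivization.exists_smul_eq_mk_rep k g hg0
      refine ⟨Projectivization.mk k g hg0, ⟨?_, ?_⟩, ?_⟩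
      · refine Set.mem_biUnion hvS ⟨?_, ?_⟩
        · intro w hw
          have h0 : g w = 0 := hsupp (Sum.inl w) fun hm => hw ((hA G x y hvx hvy w).1 hm)
          rw [← ha]
          simp [h0]
        · rw [← ha]
          simp only [Pi.smul_apply, Units.smul_def, smul_eq_mul, ne_eq, mul_eq_zero, not_or]
          exact ⟨a.ne_zero, hnz⟩
      · intro hmem
        apply hqP
        rintro (w | b) hu
        · have hw : w ∉ closedBall G x ∪ closedBall G y :=
            fun hc => hu ((hC G x y hne w).2 hc)
          have h0 : (Projectivization.mk k g hg0).rep w = 0 := hmem w hw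
          rw [← ha] at h0
          have : g w = 0 := by simpa [Units.smul_def, a.ne_zero] using h0
          exact this
        · exact hinr b
      · rw [hFdef, Projectivization.map_mk]
        conv_rhs => rw [← q.mk_rep]
        exact (Projectivization.mk_eq_mk_iff' k _ _ _ _).2 ⟨1, by rw [one_smul]; exact hext.symm⟩
  have hfin : Finite (Projectivization k (V → k)) := Quotient.finite _
  have hfin' : Finite (Projectivization k (V ⊕ Bool → k)) := Quotient.finite _
  have h1 := Set.ncard_inter_add_ncard_diff_eq_ncard X P (Set.toFinite X)
  have h2 := Set.ncard_inter_add_ncard_diff_eq_ncard X' P' (Set.toFinite X')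
  have h3 : (X \ P).ncard = (X' \ P').ncard := by
    rw [← himg, Set.ncard_image_of_injective _ (Projectivization.map_injective ι hι)]
  omega
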